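/- Let F be a generic discrete Morse function on a finite regular cell complex, let (α^{(i)}, β^{(j)}) with j ≥ i+2, α < β, F(α) > F(β) be a pair violating tameness that is maximal with respect to the order comparing j. Let ε^{(j−1)} be a facet of β with α < ε and F(ε) > F(α). Then replacing F(β) by any value in the open interval (F(α), F(ε)) (chosen so that the new function is still generic) yields a discrete Morse function with the same critical cells as F, and the new function has strictly fewer tameness-violating pairs. -/
import Mathlib


/-- A finite regular cell complex, modeled combinatorially as a finite graded poset of
cells: `face α β` means `α` is a (proper, iterated) face of `β`.  Regularity provides the
diamond property (between a cell and a codimension-two face there are at least two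
intermediate cells) and existence of intermediate cells in any interval. -/
structure RegularCellComplex where
  Cell : Type
  [fintypeCell : Fintype Cell]
  [decEqCell : DecidableEq Cell]
  face : Cell → Cell → Prop
  dim : Cell → ℕ
  face_trans : ∀ {α β γ}, face α β → face β γ → face α γ
  face_dim : ∀ {α β}, face α β → dim α < dim β
  diamond : ∀ {α β}, face α β → dim β = dim α + 2 →
    ∃ δ₁ δ₂, δ₁ ≠ δ₂ ∧ dim δ₁ = dim α + 1 ∧ dim δ₂ = dim α + 1 ∧
      face α δ₁ ∧ face δ₁ β ∧ face α δ₂ ∧ face δ₂ β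
  interval : ∀ {α β}, face α β → dim α + 2 ≤ dim β →
    ∃ δ, dim δ = dim α + 1 ∧ face α δ ∧ face δ β

attribute [instance] RegularCellComplex.fintypeCell RegularCellComplex.decEqCell

/-- `F` is a discrete Morse function (Forman): for each cell there is at most one
coface of dimension one higher with value `≤`, and at most one face of dimension one
lower with value `≥`. -/
def IsDiscreteMorse (X : RegularCellComplex) (F : X.Cell → ℝ) : Prop :=
  ∀ α : X.Cell,
    {β | X.face α β ∧ X.dim β = X.dim α + 1 ∧ F β ≤ F α}.Subsingleton ∧
    {γ | X.face γ α ∧ X.dim γ + 1 = X.dim α ∧ F α ≤ F γ}.Subsingleton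

/-- `F` is generic: distinct values on incident cells. -/
def IsGeneric (X : RegularCellComplex) (F : X.Cell → ℝ) : Prop :=
  ∀ {α β : X.Cell}, X.face α β → F α ≠ F β

/-- `F` is tame: faces of codimension at least two have strictly smaller value. -/
def IsTame (X : RegularCellComplex) (F : X.Cell → ℝ) : Prop :=
  ∀ {α β : X.Cell}, X.face α β → X.dim α + 2 ≤ X.dim β → F α < F β

/-- A cell `α` is critical for `F`: no exceptional coface and no exceptional face. -/
def IsCritical (X : RegularCellComplex) (F : X.Cell → ℝ) (α : X.Cell) : Prop :=
  (¬ ∃ β, X.face α β ∧ X.dim β = X.dim α + 1 ∧ F β ≤ F α) ∧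
  (¬ ∃ γ, X.face γ α ∧ X.dim γ + 1 = X.dim α ∧ F α ≤ F γ)

/-- The set of tameness-violating pairs of `F`: pairs `(α, β)` with `α < β`,
`dim β ≥ dim α + 2` and `F α > F β`. -/
def ViolatingPairs (X : RegularCellComplex) (F : X.Cell → ℝ) : Set (X.Cell × X.Cell) :=
  {p | X.face p.1 p.2 ∧ X.dim p.1 + 2 ≤ X.dim p.2 ∧ F p.2 < F p.1}

/-- induction step of Lemma 3.2: Let `F` be a generic discrete Morse
function, `(α, β)` a tameness-violating pair maximal with respect to `dim β`, and `ε` a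
facet of `β` with `α < ε` and `F ε > F α` (so that every `η > β` has `F η > F ε`).
Then replacing `F β` by any value `v ∈ (F α, F ε)` keeping genericity yields a discrete
Morse function with the same critical cells and strictly fewer tameness-violating pairs. -/
theorem stmt11 (X : RegularCellComplex) (F : X.Cell → ℝ)
    (hF : IsDiscreteMorse X F) (hgen : IsGeneric X F)
    (α β ε : X.Cell)
    (hviol : (α, β) ∈ ViolatingPairs X F)
    (hmax : ∀ p ∈ ViolatingPairs X F, X.dim p.2 ≤ X.dim β)
    (hαε : X.face α ε) (hεβ : X.face ε β) (hεdim : X.dim ε + 1 = X.dim β)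
    (hεval : F α < F ε)
    (hη : ∀ η, X.face β η → F ε < F η)
    (v : ℝ) (hv : v ∈ Set.Ioo (F α) (F ε))
    (F' : X.Cell → ℝ) (hF' : F' = Function.update F β v)
    (hgen' : IsGeneric X F') :
    IsDiscreteMorse X F' ∧
    (∀ γ, IsCritical X F' γ ↔ IsCritical X F γ) ∧
    (ViolatingPairs X F').ncard < (ViolatingPairs X F).ncard := by

  obtain ⟨hαβ, hdim, hFβα⟩ := hviol
  obtain ⟨hvα, hvε⟩ := hv
  have hβε : F β < F ε := hFβα.trans hεval
  have hneβ : ∀ {x : X.Cell}, X.face x β → x ≠ β := by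
    intro x h he; subst he; exact lt_irrefl _ (X.face_dim h)
  have hneβ' : ∀ {x : X.Cell}, X.face β x → x ≠ β := by
    intro x h he; subst he; exact lt_irrefl _ (X.face_dim h)
  have hF'β : F' β = v := by rw [hF']; simp
  have hF'ne : ∀ x : X.Cell, x ≠ β → F' x = F x := by
    intro x hx; rw [hF']; exact Function.update_of_ne hx _ _
  -- key fact: for facets γ of β, F β ≤ F γ ↔ v ≤ F γ
  have keyA : ∀ γ : X.Cell, X.face γ β → X.dim γ + 1 = X.dim β →
      ((F β ≤ F γ) ↔ (v ≤ F γ)) := by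
    intro γ hγ hd
    constructor
    · intro h
      have hγε : γ = ε := (hF β).2 ⟨hγ, hd, h⟩ ⟨hεβ, hεdim, hβε.le⟩
      subst hγε; exact hvε.le
    · intro h; linarith
  have ptwiseUp : ∀ a b : X.Cell, X.face a b → X.dim b = X.dim a + 1 →
      ((F' b ≤ F' a) ↔ (F b ≤ F a)) := by
    intro a b hfc hd
    by_cases hb : b = β
    · subst hb
      rw [hF'β, hF'ne a (hneβ hfc)]
      exact (keyA a hfc hd.symm).symm
    · by_cases ha : a = β
      · subst ha
        rw [hF'ne b hb, hF'β]
        have := hη b hfc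
        constructor <;> intro <;> linarith
      · rw [hF'ne b hb, hF'ne a ha]
  have ptwiseLow : ∀ a b : X.Cell, X.face b a → X.dim b + 1 = X.dim a →
      ((F' a ≤ F' b) ↔ (F a ≤ F b)) := by
    intro a b hfc hd
    by_cases hb : b = β
    · subst hb
      rw [hF'β, hF'ne a (hneβ' hfc)]
      have := hη a hfc
      constructor <;> intro <;> linarith
    · by_cases ha : a = β
      · subst ha
        rw [hF'ne b hb, hF'β]
        exact (keyA b hfc hd).symm
      · rw [hF'ne b hb, hF'ne a ha]
  have hαne : α ≠ β := hneβ hαβ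
  refine ⟨?_, ?_, ?_⟩
  · intro a
    constructor
    · intro x hx y hy
      exact (hF a).1 ⟨hx.1, hx.2.1, (ptwiseUp a x hx.1 hx.2.1).mp hx.2.2⟩
        ⟨hy.1, hy.2.1, (ptwiseUp a y hy.1 hy.2.1).mp hy.2.2⟩
    · intro x hx y hy
      exact (hF a).2 ⟨hx.1, hx.2.1, (ptwiseLow a x hx.1 hx.2.1).mp hx.2.2⟩
        ⟨hy.1, hy.2.1, (ptwiseLow a y hy.1 hy.2.1).mp hy.2.2⟩
  · intro γ
    constructor
    · rintro ⟨h1, h2⟩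
      constructor
      · rintro ⟨b, hb1, hb2, hb3⟩
        exact h1 ⟨b, hb1, hb2, (ptwiseUp γ b hb1 hb2).mpr hb3⟩
      · rintro ⟨b, hb1, hb2, hb3⟩
        exact h2 ⟨b, hb1, hb2, (ptwiseLow γ b hb1 hb2).mpr hb3⟩
    · rintro ⟨h1, h2⟩
      constructor
      · rintro ⟨b, hb1, hb2, hb3⟩
        exact h1 ⟨b, hb1, hb2, (ptwiseUp γ b hb1 hb2).mp hb3⟩
      · rintro ⟨b, hb1, hb2, hb3⟩
        exact h2 ⟨b, hb1, hb2, (ptwiseLow γ b hb1 hb2).mp hb3⟩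
  · have hsub : ViolatingPairs X F' ⊆ ViolatingPairs X F := by
      rintro ⟨a, b⟩ ⟨h1, h2, h3⟩
      refine ⟨h1, h2, ?_⟩
      simp only at h1 h2 h3 ⊢
      by_cases hb : b = β
      · subst hb
        rw [hF'β, hF'ne a (hneβ h1)] at h3
        linarith
      · by_cases ha : a = β
        · subst ha
          rw [hF'ne b hb, hF'β] at h3
          have := hη b h1
          linarith
        · rwa [hF'ne b hb, hF'ne a ha] at h3
    have hmem : (α, β) ∈ ViolatingPairs X F := ⟨hαβ, hdim, hFβα⟩
    have hnmem : (α, β) ∉ ViolatingPairs X F' := by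
      rintro ⟨-, -, h3⟩
      simp only at h3
      rw [hF'β, hF'ne α hαne] at h3
      linarith
    exact Set.ncard_lt_ncard ⟨hsub, fun hle => hnmem (hle hmem)⟩ (Set.toFinite _)
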